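/- (Privacy calibration for a posteriori estimation error) In addition to the stated filtering assumptions, suppose for each i that the privacy-noise standard deviation is σ_i = (Δ_i/(2ε_i))·(K_i + √(K_i² + 2ε_i)) with Δ_i > 0, ε_i > 0, and K_i ∈ [1, 4.5]. Let B_l, B_u be given with 0 < B_l < n·λ_min(W) and B_u > 0. Let u be an index maximizing c_i²/σ_i² and l an index minimizing c_i²/σ_i², and define for each i: η₃ᵢ := √( B_l·c_u² / ( Δ_i²·( n − B_l/λ_min(W) ) ) ) and η₄ᵢ := √( B_u·c_l² / ( n·Δ_i² ) ). If for every i, (1/8)·((1 + √(36η₄ᵢ + 1))/η₄ᵢ)² ≤ ε_i ≤ 1/η₃ᵢ, then B_l ≤ tr(Σ̄) ≤ B_u, where Σ̄ := (Cᵀ V⁻¹ C + Σ⁻¹)⁻¹. -/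

import Mathlib

open Matrix

section Aux

lemma myPSD_trace_nonneg {n : ℕ} {M : Matrix (Fin n) (Fin n) ℝ}
    (hM : M.PosSemidef) : 0 ≤ M.trace := by
  rw [Matrix.trace]
  refine Finset.sum_nonneg fun i _ => ?_
  exact hM.diag_nonneg

lemma myPSD_conj {n m : ℕ} {M : Matrix (Fin n) (Fin n) ℝ} (hM : M.PosSemidef)
    (B : Matrix (Fin m) (Fin n) ℝ) : (B * M * Bᵀ).PosSemidef := by
  have := hM.mul_mul_conjTranspose_same B
  rwa [Matrix.conjTranspose_eq_transpose_of_trivial] at this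

lemma myInv_antitone {n : ℕ} {P Q : Matrix (Fin n) (Fin n) ℝ}
    (hP : P.PosDef) (hQ : Q.PosDef) (h : (Q - P).PosSemidef) :
    (P⁻¹ - Q⁻¹).PosSemidef := by
  have hPu : IsUnit P.det := hP.det_pos.ne'.isUnit
  have hQu : IsUnit Q.det := hQ.det_pos.ne'.isUnit
  have hPP : P * P⁻¹ = 1 := Matrix.mul_nonsing_inv _ hPu
  have hPP' : P⁻¹ * P = 1 := Matrix.nonsing_inv_mul _ hPu
  have hQQ : Q * Q⁻¹ = 1 := Matrix.mul_nonsing_inv _ hQu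
  have hQQ' : Q⁻¹ * Q = 1 := Matrix.nonsing_inv_mul _ hQu
  have hmid : ((Q - P) * P⁻¹ * (Q - P) + (Q - P)).PosSemidef := by
    have h1 := myPSD_conj hP.inv.posSemidef (Q - P)
    rw [show (Q - P)ᵀ = Q - P from h.1] at h1
    exact h1.add h
  have h2 := myPSD_conj hmid Q⁻¹
  rw [show (Q⁻¹)ᵀ = Q⁻¹ from hQ.inv.isHermitian] at h2
  have key : Q⁻¹ * ((Q - P) * P⁻¹ * (Q - P) + (Q - P)) * Q⁻¹ = P⁻¹ - Q⁻¹ := by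
    have e1 : (Q - P) * P⁻¹ * (Q - P) + (Q - P) = Q * P⁻¹ * Q - Q := by
      simp only [Matrix.sub_mul, Matrix.mul_sub]
      rw [Matrix.mul_assoc Q P⁻¹ P, hPP', hPP]
      simp only [Matrix.mul_one, Matrix.one_mul]
      abel
    rw [e1, Matrix.mul_sub, Matrix.sub_mul, ← Matrix.mul_assoc, ← Matrix.mul_assoc, hQQ',
      Matrix.one_mul, Matrix.mul_assoc, hQQ, Matrix.mul_one, Matrix.one_mul]
  rwa [key] at h2

lemma mySub_smul_one_posSemidef {n : ℕ} [Nonempty (Fin n)] {W : Matrix (Fin n) (Fin n) ℝ}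
    (hW : W.PosDef) :
    (W - (⨅ j, hW.1.eigenvalues j) • (1 : Matrix (Fin n) (Fin n) ℝ)).PosSemidef := by
  set μ := ⨅ j, hW.1.eigenvalues j with hμ
  have hle : ∀ j, μ ≤ hW.1.eigenvalues j := fun j =>
    ciInf_le (Set.Finite.bddBelow (Set.finite_range _)) j
  have hspec := hW.1.spectral_theorem
  set U : Matrix (Fin n) (Fin n) ℝ := (hW.1.eigenvectorUnitary : Matrix (Fin n) (Fin n) ℝ)
  have hUU : U * star U = 1 := (Matrix.mem_unitaryGroup_iff).mp hW.1.eigenvectorUnitary.2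
  have hdiag : (Matrix.diagonal (fun i => hW.1.eigenvalues i - μ)).PosSemidef :=
    Matrix.posSemidef_diagonal_iff.mpr fun i => sub_nonneg.mpr (hle i)
  have h1 := hdiag.mul_mul_conjTranspose_same U
  have key : U * (Matrix.diagonal fun i => hW.1.eigenvalues i - μ) * Uᴴ = W - μ • 1 := by
    have : (Matrix.diagonal fun i => hW.1.eigenvalues i - μ)
        = Matrix.diagonal (RCLike.ofReal ∘ hW.1.eigenvalues) - μ • 1 := by
      rw [Matrix.smul_one_eq_diagonal, ← Matrix.diagonal_sub]
      simp [RCLike.ofReal_real_eq_id]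
    rw [this, Matrix.mul_sub, Matrix.sub_mul, ← Matrix.star_eq_conjTranspose]
    conv_rhs => rw [hspec]
    simp only [Unitary.conjStarAlgAut_apply]
    congr 1
    rw [Matrix.mul_smul, Matrix.smul_mul, Matrix.mul_one, hUU]
  rwa [key] at h1

lemma myInf_eig_pos {n : ℕ} [Nonempty (Fin n)] {W : Matrix (Fin n) (Fin n) ℝ}
    (hW : W.PosDef) : 0 < ⨅ j, hW.1.eigenvalues j := by
  obtain ⟨j, hj⟩ := exists_eq_ciInf_of_finite (f := hW.1.eigenvalues)
  rw [← hj]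
  exact hW.eigenvalues_pos j

lemma myCalib_lower (Δ ε K η : ℝ) (hΔ : 0 < Δ) (hε : 0 < ε) (hη : 0 < η)
    (hK : 1 ≤ K) (h : ε ≤ 1 / η) :
    Δ * η ≤ Δ / (2 * ε) * (K + Real.sqrt (K ^ 2 + 2 * ε)) := by
  have hs : K ≤ Real.sqrt (K ^ 2 + 2 * ε) :=
    Real.le_sqrt_of_sq_le (by nlinarith)
  have h2 : (2 : ℝ) ≤ K + Real.sqrt (K ^ 2 + 2 * ε) := by linarith
  have hεη : ε * η ≤ 1 := (le_div_iff₀ hη).mp h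
  have step1 : Δ * η ≤ Δ / (2 * ε) * 2 := by
    rw [div_mul_eq_mul_div, le_div_iff₀ (by linarith)]
    nlinarith
  calc Δ * η ≤ Δ / (2 * ε) * 2 := step1
  _ ≤ _ := by
    apply mul_le_mul_of_nonneg_left h2
    positivity

lemma myCalib_upper (Δ ε K η : ℝ) (hΔ : 0 < Δ) (hε : 0 < ε) (hη : 0 < η)
    (hK1 : 1 ≤ K) (hK2 : K ≤ 4.5)
    (h : 1 / 8 * ((1 + Real.sqrt (36 * η + 1)) / η) ^ 2 ≤ ε) :
    Δ / (2 * ε) * (K + Real.sqrt (K ^ 2 + 2 * ε)) ≤ Δ * η := by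
  set s := Real.sqrt (36 * η + 1) with hsdef
  have hs1 : 1 ≤ s := Real.le_sqrt_of_sq_le (by nlinarith)
  have hs2 : s ^ 2 = 36 * η + 1 := Real.sq_sqrt (by linarith)
  set t := Real.sqrt (2 * ε) with htdef
  have ht : 0 < t := Real.sqrt_pos.mpr (by linarith)
  have ht2 : t ^ 2 = 2 * ε := Real.sq_sqrt (by linarith)
  have h8 : (1 + s) ^ 2 ≤ 8 * ε * η ^ 2 := by
    have hq : (1 + s) ^ 2 = ((1 + s) / η) ^ 2 * η ^ 2 := by field_simp
    have h' := mul_le_mul_of_nonneg_right h (sq_nonneg η)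
    nlinarith [h']
  have h1 : (1 + s) / (2 * η) ≤ t := by
    rw [htdef]
    apply Real.le_sqrt_of_sq_le
    rw [div_pow, div_le_iff₀ (by positivity)]
    nlinarith [h8]
  have ht0' : 1 + s ≤ 2 * η * t := by
    rw [div_le_iff₀ (by positivity)] at h1
    linarith
  have key : 9 + t ≤ η * t ^ 2 := by
    nlinarith [mul_self_le_mul_self (by positivity : (0:ℝ) ≤ 1 + s) ht0', hs2, ht.le, hη.le]
  have hsq : Real.sqrt (K ^ 2 + 2 * ε) ≤ K + t := by
    rw [show K + t = Real.sqrt ((K + t) ^ 2) from (Real.sqrt_sq (by linarith)).symm]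
    exact Real.sqrt_le_sqrt (by nlinarith)
  have hbound : K + Real.sqrt (K ^ 2 + 2 * ε) ≤ 9 + t := by
    have : K + Real.sqrt (K ^ 2 + 2 * ε) ≤ K + (K + t) := by linarith
    norm_num at hK2
    linarith
  calc Δ / (2 * ε) * (K + Real.sqrt (K ^ 2 + 2 * ε))
      ≤ Δ / (2 * ε) * (9 + t) := by
        apply mul_le_mul_of_nonneg_left hbound; positivity
  _ ≤ Δ / (2 * ε) * (η * t ^ 2) := by
        apply mul_le_mul_of_nonneg_left key; positivity
  _ = Δ * η := by rw [ht2]; field_simp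

lemma myRiccati_sub_psd {n : ℕ} {A W S D Vm : Matrix (Fin n) (Fin n) ℝ}
    (hS : S.PosDef) (hVm : Vm.PosDef)
    (hric : S = A * S * Aᵀ - A * S * Dᵀ * (D * S * Dᵀ + Vm)⁻¹ * D * S * Aᵀ + W) :
    (S - W).PosSemidef := by
  set N := D * S * Dᵀ + Vm with hNdef
  have hNpd : N.PosDef := Matrix.PosDef.posSemidef_add (myPSD_conj hS.posSemidef D) hVm
  have hNs : Nᵀ = N := by
    rw [← Matrix.conjTranspose_eq_transpose_of_trivial]; exact hNpd.isHermitian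
  have hSs : Sᵀ = S := by
    rw [← Matrix.conjTranspose_eq_transpose_of_trivial]; exact hS.isHermitian
  have hNu : IsUnit N.det := hNpd.det_pos.ne'.isUnit
  have hNi : N⁻¹ * N = 1 := Matrix.nonsing_inv_mul _ hNu
  have hNi' : N * N⁻¹ = 1 := Matrix.mul_nonsing_inv _ hNu
  have htr : (S * Dᵀ * N⁻¹)ᵀ = N⁻¹ * (D * S) := by
    rw [Matrix.transpose_mul, Matrix.transpose_mul, Matrix.transpose_nonsing_inv, hNs,
      Matrix.transpose_transpose, hSs]
  have hVm' : Vm = N - D * S * Dᵀ := by rw [hNdef]; abel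
  have hmid : (1 - S * Dᵀ * N⁻¹ * D) * S * (1 - S * Dᵀ * N⁻¹ * D)ᵀ +
      (S * Dᵀ * N⁻¹) * Vm * (S * Dᵀ * N⁻¹)ᵀ = S - S * Dᵀ * N⁻¹ * D * S := by
    rw [Matrix.transpose_sub, Matrix.transpose_one]
    rw [show (S * Dᵀ * N⁻¹ * D)ᵀ = ((S * Dᵀ * N⁻¹) * D)ᵀ from rfl, Matrix.transpose_mul, htr]
    rw [hVm']
    have hcanc : N * (N⁻¹ * (D * S)) = D * S := by
      rw [← Matrix.mul_assoc, hNi', Matrix.one_mul]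
    simp only [Matrix.mul_sub, Matrix.sub_mul, Matrix.mul_one, Matrix.one_mul,
      Matrix.mul_assoc, hcanc]
    abel
  have hmidPSD : (S - S * Dᵀ * N⁻¹ * D * S).PosSemidef := by
    rw [← hmid]
    exact (myPSD_conj hS.posSemidef _).add (myPSD_conj hVm.posSemidef _)
  have h3 : S - W = A * S * Aᵀ - A * S * Dᵀ * N⁻¹ * D * S * Aᵀ :=
    sub_eq_iff_eq_add.mpr hric
  have h4 : A * S * Aᵀ - A * S * Dᵀ * N⁻¹ * D * S * Aᵀ
      = A * (S - S * Dᵀ * N⁻¹ * D * S) * Aᵀ := by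
    simp only [Matrix.mul_sub, Matrix.sub_mul, Matrix.mul_assoc]
  rw [h3, h4]
  exact myPSD_conj hmidPSD A

lemma myDiag_inv {n : ℕ} (v : Fin n → ℝ) (hv : ∀ i, v i ≠ 0) :
    (Matrix.diagonal v)⁻¹ = Matrix.diagonal (fun i => (v i)⁻¹) := by
  apply Matrix.inv_eq_right_inv
  rw [Matrix.diagonal_mul_diagonal]
  rw [show (fun i => v i * (v i)⁻¹) = fun _ : Fin n => (1:ℝ) from
    funext fun i => mul_inv_cancel₀ (hv i)]
  exact Matrix.diagonal_one

end Aux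

/-- Privacy calibration for a posteriori estimation error: if each `εᵢ` lies
in the window `[(1/8)((1+√(36η₄ᵢ+1))/η₄ᵢ)², 1/η₃ᵢ]`, then
`B_l ≤ tr Σ̄ ≤ B_u` with `Σ̄ = (Cᵀ V⁻¹ C + Σ⁻¹)⁻¹`. -/
theorem privacy_calibration_aposteriori {n : ℕ} (hn : 1 ≤ n)
    (A W S : Matrix (Fin n) (Fin n) ℝ)
    (c σ : Fin n → ℝ) (hc : ∀ i, 0 < c i) (hσ : ∀ i, 0 < σ i)
    (hW : W.PosDef) (hS : S.PosDef)
    (hric : S = A * S * Aᵀ -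
        A * S * (Matrix.diagonal c)ᵀ *
          (Matrix.diagonal c * S * (Matrix.diagonal c)ᵀ +
            Matrix.diagonal fun i => σ i ^ 2)⁻¹ *
          Matrix.diagonal c * S * Aᵀ + W)
    (Δ ε Kd : Fin n → ℝ) (hΔ : ∀ i, 0 < Δ i) (hε : ∀ i, 0 < ε i)
    (hKd : ∀ i, 1 ≤ Kd i ∧ Kd i ≤ 4.5)
    (hσdef : ∀ i, σ i = Δ i / (2 * ε i) * (Kd i + Real.sqrt (Kd i ^ 2 + 2 * ε i)))
    (Bl Bu : ℝ) (hBl1 : 0 < Bl)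
    (hBl2 : Bl < (n : ℝ) * ⨅ j, hW.1.eigenvalues j)
    (hBu : 0 < Bu)
    (u l : Fin n)
    (hu : ∀ i, c i ^ 2 / σ i ^ 2 ≤ c u ^ 2 / σ u ^ 2)
    (hl : ∀ i, c l ^ 2 / σ l ^ 2 ≤ c i ^ 2 / σ i ^ 2)
    (hcal : ∀ i,
      (1 / 8) * ((1 + Real.sqrt
            (36 * Real.sqrt (Bu * c l ^ 2 / ((n : ℝ) * Δ i ^ 2)) + 1)) /
          Real.sqrt (Bu * c l ^ 2 / ((n : ℝ) * Δ i ^ 2))) ^ 2 ≤ ε i ∧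
        ε i ≤ 1 / Real.sqrt (Bl * c u ^ 2 /
          (Δ i ^ 2 * ((n : ℝ) - Bl / ⨅ j, hW.1.eigenvalues j)))) :
    Bl ≤ (((Matrix.diagonal c)ᵀ * (Matrix.diagonal fun i => σ i ^ 2)⁻¹ *
          Matrix.diagonal c + S⁻¹)⁻¹).trace ∧
      (((Matrix.diagonal c)ᵀ * (Matrix.diagonal fun i => σ i ^ 2)⁻¹ *
          Matrix.diagonal c + S⁻¹)⁻¹).trace ≤ Bu := by
  haveI : Nonempty (Fin n) := Fin.pos_iff_nonempty.mp hn
  have hnR : (0:ℝ) < n := by exact_mod_cast hn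
  set μ := ⨅ j, hW.1.eigenvalues j with hμdef
  have hμ : 0 < μ := myInf_eig_pos hW
  -- the diagonal simplification
  set g : Fin n → ℝ := fun i => c i ^ 2 / σ i ^ 2 with hgdef
  have hgpos : ∀ i, 0 < g i := fun i => by
    have := hc i; have := hσ i; positivity
  have hG : (Matrix.diagonal c)ᵀ * (Matrix.diagonal fun i => σ i ^ 2)⁻¹ *
      Matrix.diagonal c = Matrix.diagonal g := by
    rw [Matrix.diagonal_transpose, myDiag_inv _ (fun i => pow_ne_zero 2 (hσ i).ne'),
      Matrix.diagonal_mul_diagonal, Matrix.diagonal_mul_diagonal]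
    refine congrArg Matrix.diagonal (funext fun i => ?_)
    have hσi := (hσ i).ne'
    simp only [hgdef, Pi.mul_apply]
    field_simp
  rw [hG]
  -- positivity facts
  have hVmPD : (Matrix.diagonal fun i => σ i ^ 2).PosDef :=
    Matrix.PosDef.diagonal fun i => by have := hσ i; positivity
  have hSW : (S - W).PosSemidef := myRiccati_sub_psd hS hVmPD hric
  have hGpd : (Matrix.diagonal g).PosDef := Matrix.PosDef.diagonal hgpos
  have hTpd : (Matrix.diagonal g + S⁻¹).PosDef := hGpd.add hS.inv
  -- σ_l upper bound
  have hden : (0:ℝ) < (n:ℝ) - Bl / μ := by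
    have : Bl / μ < n := (div_lt_iff₀ hμ).mpr (by linarith [hBl2])
    linarith
  have hη4pos : ∀ i : Fin n, 0 < Real.sqrt (Bu * c l ^ 2 / ((n : ℝ) * Δ i ^ 2)) := fun i => by
    apply Real.sqrt_pos.mpr
    have := hΔ i; have := hc l
    positivity
  have hη3pos : ∀ i : Fin n,
      0 < Real.sqrt (Bl * c u ^ 2 / (Δ i ^ 2 * ((n : ℝ) - Bl / μ))) := fun i => by
    apply Real.sqrt_pos.mpr
    have := hΔ i; have := hc u
    positivity
  have hσl2 : σ l ^ 2 ≤ Bu * c l ^ 2 / n := by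
    have hcal1 := (hcal l).1
    have hup := myCalib_upper (Δ l) (ε l) (Kd l)
      (Real.sqrt (Bu * c l ^ 2 / ((n : ℝ) * Δ l ^ 2))) (hΔ l) (hε l) (hη4pos l)
      (hKd l).1 (hKd l).2 hcal1
    rw [← hσdef l] at hup
    have hsq : σ l ^ 2 ≤ (Δ l * Real.sqrt (Bu * c l ^ 2 / ((n : ℝ) * Δ l ^ 2))) ^ 2 := by
      apply pow_le_pow_left₀ (hσ l).le hup
    rw [mul_pow, Real.sq_sqrt (by positivity)] at hsq
    calc σ l ^ 2 ≤ Δ l ^ 2 * (Bu * c l ^ 2 / ((n : ℝ) * Δ l ^ 2)) := hsq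
    _ = Bu * c l ^ 2 / n := by
        rw [mul_comm ((n:ℝ)) (Δ l ^ 2), ← mul_div_assoc,
          mul_div_mul_left _ _ (pow_ne_zero 2 (hΔ l).ne')]
  -- σ_u lower bound
  have hσu2 : Bl * c u ^ 2 / ((n : ℝ) - Bl / μ) ≤ σ u ^ 2 := by
    have hcal2 := (hcal u).2
    have hlow := myCalib_lower (Δ u) (ε u) (Kd u)
      (Real.sqrt (Bl * c u ^ 2 / (Δ u ^ 2 * ((n : ℝ) - Bl / μ)))) (hΔ u) (hε u) (hη3pos u)
      (hKd u).1 hcal2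
    rw [← hσdef u] at hlow
    have hsq : (Δ u * Real.sqrt (Bl * c u ^ 2 / (Δ u ^ 2 * ((n : ℝ) - Bl / μ)))) ^ 2
        ≤ σ u ^ 2 := by
      apply pow_le_pow_left₀ (mul_nonneg (hΔ u).le (Real.sqrt_nonneg _)) hlow
    rw [mul_pow, Real.sq_sqrt (by positivity)] at hsq
    calc Bl * c u ^ 2 / ((n : ℝ) - Bl / μ)
        = Δ u ^ 2 * (Bl * c u ^ 2 / (Δ u ^ 2 * ((n : ℝ) - Bl / μ))) := by
          rw [← mul_div_assoc, mul_div_mul_left _ _ (pow_ne_zero 2 (hΔ u).ne')]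
    _ ≤ σ u ^ 2 := hsq
  constructor
  · -- lower bound
    set α : ℝ := g u + μ⁻¹ with hαdef
    have hαpos : 0 < α := by
      have := hgpos u
      positivity
    have hαI_pd : (α • (1 : Matrix (Fin n) (Fin n) ℝ)).PosDef := by
      rw [Matrix.smul_one_eq_diagonal]
      exact Matrix.PosDef.diagonal fun _ => hαpos
    have hμI_pd : (μ • (1 : Matrix (Fin n) (Fin n) ℝ)).PosDef := by
      rw [Matrix.smul_one_eq_diagonal]
      exact Matrix.PosDef.diagonal fun _ => hμ
    have hμinv : (μ • (1 : Matrix (Fin n) (Fin n) ℝ))⁻¹ = μ⁻¹ • 1 := by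
      apply Matrix.inv_eq_right_inv
      rw [Matrix.smul_mul, Matrix.mul_smul, Matrix.one_mul, smul_smul,
        mul_inv_cancel₀ hμ.ne', one_smul]
    have hWS : (W⁻¹ - S⁻¹).PosSemidef := myInv_antitone hW hS hSW
    have hμW : ((μ:ℝ)⁻¹ • (1 : Matrix (Fin n) (Fin n) ℝ) - W⁻¹).PosSemidef := by
      have := myInv_antitone hμI_pd hW (mySub_smul_one_posSemidef hW)
      rwa [hμinv] at this
    have hsub2 : (α • (1 : Matrix (Fin n) (Fin n) ℝ) -
        (Matrix.diagonal g + S⁻¹)).PosSemidef := by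
      have hdecomp : α • (1 : Matrix (Fin n) (Fin n) ℝ) - (Matrix.diagonal g + S⁻¹)
          = Matrix.diagonal (fun i => g u - g i) + ((μ⁻¹ • 1 - W⁻¹) + (W⁻¹ - S⁻¹)) := by
        have e : (Matrix.diagonal (fun _ : Fin n => α) : Matrix (Fin n) (Fin n) ℝ)
            = Matrix.diagonal (fun i => g u - g i) + Matrix.diagonal g
              + Matrix.diagonal (fun _ : Fin n => μ⁻¹) := by
          rw [Matrix.diagonal_add, Matrix.diagonal_add]
          congr 1
          funext i
          simp only [hαdef]
          ring
        rw [Matrix.smul_one_eq_diagonal, Matrix.smul_one_eq_diagonal, e]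
        abel
      rw [hdecomp]
      refine Matrix.PosSemidef.add ?_ (hμW.add hWS)
      exact Matrix.posSemidef_diagonal_iff.mpr fun i => sub_nonneg.mpr (hu i)
    have hmono2 := myInv_antitone hTpd hαI_pd hsub2
    have hαinv : (α • (1 : Matrix (Fin n) (Fin n) ℝ))⁻¹ = α⁻¹ • 1 := by
      apply Matrix.inv_eq_right_inv
      rw [Matrix.smul_mul, Matrix.mul_smul, Matrix.one_mul, smul_smul,
        mul_inv_cancel₀ hαpos.ne', one_smul]
    rw [hαinv] at hmono2
    have htr := myPSD_trace_nonneg hmono2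
    rw [Matrix.trace_sub, Matrix.trace_smul, Matrix.trace_one] at htr
    simp only [Fintype.card_fin, smul_eq_mul] at htr
    have hTlow : α⁻¹ * n ≤ ((Matrix.diagonal g + S⁻¹)⁻¹).trace := by linarith
    -- now α ≤ n / Bl
    have hgu : g u ≤ ((n:ℝ) - Bl / μ) / Bl := by
      have h1 : g u = c u ^ 2 / σ u ^ 2 := rfl
      rw [h1]
      have hpos2 : 0 < Bl * c u ^ 2 / ((n : ℝ) - Bl / μ) := by
        have := hc u; positivity
      have := div_le_div_of_nonneg_left (by positivity : (0:ℝ) ≤ c u ^ 2) hpos2 hσu2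
      calc c u ^ 2 / σ u ^ 2 ≤ c u ^ 2 / (Bl * c u ^ 2 / ((n : ℝ) - Bl / μ)) := this
      _ = ((n:ℝ) - Bl / μ) / Bl := by
          have := (hc u).ne'
          field_simp
    have hα_le : α ≤ n / Bl := by
      have heq : ((n:ℝ) - Bl / μ) / Bl + μ⁻¹ = n / Bl := by
        field_simp
        ring
      rw [hαdef]
      linarith [hgu, heq]
    have hABl : α * Bl ≤ n := by
      have := mul_le_mul_of_nonneg_right hα_le hBl1.le
      rwa [div_mul_cancel₀ _ hBl1.ne'] at this
    have hfin : Bl ≤ α⁻¹ * n := by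
      rw [inv_mul_eq_div]
      exact (le_div_iff₀ hαpos).mpr (by nlinarith [hABl])
    linarith [hTlow, hfin]
  · -- upper bound
    have hsub : ((Matrix.diagonal g + S⁻¹) - Matrix.diagonal g).PosSemidef := by
      rw [add_sub_cancel_left]
      exact hS.inv.posSemidef
    have hmono := myInv_antitone hGpd hTpd hsub
    have htr := myPSD_trace_nonneg hmono
    rw [Matrix.trace_sub] at htr
    have hGinv : (Matrix.diagonal g)⁻¹ = Matrix.diagonal fun i => (g i)⁻¹ :=
      myDiag_inv _ fun i => (hgpos i).ne'
    have hper : ∀ i, (g i)⁻¹ ≤ Bu / n := by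
      intro i
      have h1 : (g i)⁻¹ ≤ (g l)⁻¹ := inv_anti₀ (hgpos l) (hl i)
      have h2 : (g l)⁻¹ = σ l ^ 2 / c l ^ 2 := by
        simp only [hgdef]
        rw [inv_div]
      have h3 : σ l ^ 2 / c l ^ 2 ≤ Bu / n := by
        rw [div_le_div_iff₀ (by have := hc l; positivity) hnR]
        have hm := mul_le_mul_of_nonneg_right hσl2 hnR.le
        rwa [div_mul_cancel₀ _ hnR.ne'] at hm
      calc (g i)⁻¹ ≤ (g l)⁻¹ := h1
        _ = σ l ^ 2 / c l ^ 2 := h2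
        _ ≤ Bu / n := h3
    have htrG : ((Matrix.diagonal g)⁻¹).trace ≤ Bu := by
      rw [hGinv, Matrix.trace_diagonal]
      calc ∑ i, (g i)⁻¹ ≤ ∑ _i : Fin n, Bu / n :=
        Finset.sum_le_sum fun i _ => hper i
      _ = n * (Bu / n) := by rw [Finset.sum_const]; simp [Finset.card_univ]
      _ = Bu := by field_simp
    linarith [htr, htrG]
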